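/- arXiv:1909.03433 — 2 statements merged into one kernel-verified Lean document; each statement's English description precedes it below -/
import Mathlib

section
/- Fix x, points y₁, …, yₙ ∈ ℝ^d, a matrix A ∈ ℝ^{d×d}, a function h(x, ·) : ℝ^d → ℝ continuous, a compact set Ξ ⊆ ℝ^d containing ξ̂ᵢ := y_{i+1} − A yᵢ for all i, and ε₁ > 0. Then sup over probability measures F₁,…,F_{n−1} on Ξ satisfying (1/(n−1)) Σᵢ ∫ ‖ξ − ξ̂ᵢ‖² dFᵢ(ξ) ≤ ε₁ of (1/(n−1)) Σᵢ ∫ h(x, A yₙ + ξ) dFᵢ(ξ) equals inf_{u ≥ 0} [ u ε₁ + max_{ξ₁,…,ξ_{n−1} ∈ Ξ} (1/(n−1)) Σᵢ ( h(x, A yₙ + ξᵢ) − u ‖ξᵢ − ξ̂ᵢ‖² ) ]. -/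
set_option maxHeartbeats 1600000

open MeasureTheory


variable {d : ℕ}
local notation "E" => EuclideanSpace ℝ (Fin d)

lemma drso_int_bound (Ξ : Set E) (hΞc : IsCompact Ξ) (f : E → ℝ) (hf : Continuous f)
    (μ : Measure E) [IsProbabilityMeasure μ] (hμ : μ Ξᶜ = 0) :
    Integrable f μ ∧ ∀ B : ℝ, (∀ ξ ∈ Ξ, f ξ ≤ B) → ∫ ξ, f ξ ∂μ ≤ B := by
  have hae : ∀ᵐ ξ ∂μ, ξ ∈ Ξ := mem_ae_iff.2 hμ
  obtain ⟨B', hB'⟩ := hΞc.exists_bound_of_continuousOn hf.continuousOn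
  have hint : Integrable f μ := by
    refine (integrable_const B').mono' hf.aestronglyMeasurable ?_
    exact hae.mono fun ξ hξ => hB' ξ hξ
  refine ⟨hint, fun B hB => ?_⟩
  calc ∫ ξ, f ξ ∂μ ≤ ∫ _, B ∂μ :=
        integral_mono_ae hint (integrable_const B) (hae.mono fun ξ hξ => hB ξ hξ)
    _ = B := by simp

lemma drso_integral_mix {ι : Type} (t : Finset ι) (w : ι → ℝ) (hw : ∀ j ∈ t, 0 ≤ w j)
    (a : ι → E) (f : E → ℝ) (hf : Continuous f) :
    ∫ ξ, f ξ ∂(∑ j ∈ t, ENNReal.ofReal (w j) • Measure.dirac (a j)) =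
      ∑ j ∈ t, w j * f (a j) := by
  have hdint : ∀ j : ι, Integrable f (Measure.dirac (a j)) := by
    intro j
    refine (integrable_const ‖f (a j)‖).mono' hf.aestronglyMeasurable ?_
    rw [MeasureTheory.ae_dirac_eq]
    exact Filter.eventually_pure.2 le_rfl
  rw [integral_finset_sum_measure (fun j _ => (hdint j).smul_measure ENNReal.ofReal_ne_top)]
  refine Finset.sum_congr rfl fun j hj => ?_
  rw [integral_smul_measure, integral_dirac, ENNReal.toReal_ofReal (hw j hj), smul_eq_mul]

lemma drso_fst_sum {ι : Type} (t : Finset ι) (f : ι → ℝ × ℝ) :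
    (∑ j ∈ t, f j).1 = ∑ j ∈ t, (f j).1 := by
  induction t using Finset.cons_induction with
  | empty => simp
  | cons j t hj ih => simp [Finset.sum_cons, ih]

lemma drso_snd_sum {ι : Type} (t : Finset ι) (f : ι → ℝ × ℝ) :
    (∑ j ∈ t, f j).2 = ∑ j ∈ t, (f j).2 := by
  induction t using Finset.cons_induction with
  | empty => simp
  | cons j t hj ih => simp [Finset.sum_cons, ih]

theorem drso_main_aux {d m : ℕ} (hm : 0 < m)
    (Ξ : Set (EuclideanSpace ℝ (Fin d))) (hΞc : IsCompact Ξ)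
    (g : EuclideanSpace ℝ (Fin d) → ℝ) (hg : Continuous g)
    (ξh : Fin m → EuclideanSpace ℝ (Fin d)) (hmem : ∀ i, ξh i ∈ Ξ)
    (ε₁ : ℝ) (hε : 0 < ε₁) :
    sSup {r : ℝ | ∃ F : Fin m → Measure (EuclideanSpace ℝ (Fin d)),
        (∀ i, IsProbabilityMeasure (F i)) ∧ (∀ i, F i Ξᶜ = 0) ∧
        (1 / (m : ℝ)) * ∑ i, ∫ ξ, ‖ξ - ξh i‖ ^ 2 ∂(F i) ≤ ε₁ ∧
        r = (1 / (m : ℝ)) * ∑ i, ∫ ξ, g ξ ∂(F i)} =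
    ⨅ u : {u : ℝ // 0 ≤ u},
      ((u : ℝ) * ε₁ + sSup {r : ℝ | ∃ ξs : Fin m → EuclideanSpace ℝ (Fin d),
        (∀ i, ξs i ∈ Ξ) ∧
        r = (1 / (m : ℝ)) * ∑ i, (g (ξs i) - (u : ℝ) * ‖ξs i - ξh i‖ ^ 2)}) := by
  classical
  haveI : Nonempty (Fin m) := ⟨⟨0, hm⟩⟩
  have hΞne : Ξ.Nonempty := ⟨ξh ⟨0, hm⟩, hmem _⟩
  have hmR : (0 : ℝ) < m := by exact_mod_cast hm
  have hm1 : (0 : ℝ) ≤ 1 / (m : ℝ) := by positivity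
  -- abbreviations
  set cost : Fin m → EuclideanSpace ℝ (Fin d) → ℝ := fun i ξ => ‖ξ - ξh i‖ ^ 2 with hcost_def
  have hcostc : ∀ i, Continuous (cost i) :=
    fun i => ((continuous_id.sub continuous_const).norm.pow 2)
  set Pset : Set ℝ := {r : ℝ | ∃ F : Fin m → Measure (EuclideanSpace ℝ (Fin d)),
        (∀ i, IsProbabilityMeasure (F i)) ∧ (∀ i, F i Ξᶜ = 0) ∧
        (1 / (m : ℝ)) * ∑ i, ∫ ξ, ‖ξ - ξh i‖ ^ 2 ∂(F i) ≤ ε₁ ∧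
        r = (1 / (m : ℝ)) * ∑ i, ∫ ξ, g ξ ∂(F i)} with hPset_def
  set Dset : ℝ → Set ℝ := fun u => {r : ℝ | ∃ ξs : Fin m → EuclideanSpace ℝ (Fin d),
        (∀ i, ξs i ∈ Ξ) ∧
        r = (1 / (m : ℝ)) * ∑ i, (g (ξs i) - u * ‖ξs i - ξh i‖ ^ 2)} with hDset_def
  -- the tuple map into the (cost, value) plane
  set T : (Fin m → EuclideanSpace ℝ (Fin d)) → ℝ × ℝ := fun ξs =>
    ((1 / (m : ℝ)) * ∑ i, cost i (ξs i), (1 / (m : ℝ)) * ∑ i, g (ξs i)) with hT_def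
  have hTc : Continuous T := by
    refine Continuous.prodMk ?_ ?_
    · exact continuous_const.mul (continuous_finset_sum _ fun i _ =>
        ((hcostc i).comp (continuous_apply i)))
    · exact continuous_const.mul (continuous_finset_sum _ fun i _ =>
        (hg.comp (continuous_apply i)))
  -- rewrite the inner dual sets via Dset
  have hD' : ∀ u : ℝ, {r : ℝ | ∃ ξs : Fin m → EuclideanSpace ℝ (Fin d),
        (∀ i, ξs i ∈ Ξ) ∧
        r = (1 / (m : ℝ)) * ∑ i, (g (ξs i) - u * ‖ξs i - ξh i‖ ^ 2)} = Dset u :=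
    fun u => by rw [hDset_def]
  simp only [hD']
  -- box of tuples
  set Box : Set (Fin m → EuclideanSpace ℝ (Fin d)) := Set.univ.pi (fun _ => Ξ) with hBox_def
  have hBoxmem : ∀ ξs : Fin m → EuclideanSpace ℝ (Fin d), ξs ∈ Box ↔ ∀ i, ξs i ∈ Ξ := by
    intro ξs; rw [hBox_def]; simp [Set.mem_univ_pi]
  have hBoxc : IsCompact Box := isCompact_univ_pi fun _ => hΞc
  set C : Set (ℝ × ℝ) := T '' Box with hC_def
  have hCc : IsCompact C := hBoxc.image hTc
  have hcost0 : ∀ i, cost i (ξh i) = 0 := fun i => by rw [hcost_def]; simp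
  set V₀ : ℝ := (1 / (m : ℝ)) * ∑ i, g (ξh i) with hV0_def
  have hTξh : T ξh = (0, V₀) := by
    have h0 : ∑ i : Fin m, cost i (ξh i) = 0 := Finset.sum_eq_zero fun i _ => hcost0 i
    rw [hT_def]
    simp [h0, hV0_def]
  have hSlater : ((0 : ℝ), V₀) ∈ C := ⟨ξh, (hBoxmem ξh).2 hmem, hTξh⟩
  -- algebra: dual objective at a tuple
  have hT1 : ∀ ξs : Fin m → EuclideanSpace ℝ (Fin d),
      (T ξs).1 = (1 / (m : ℝ)) * ∑ i, cost i (ξs i) := fun ξs => by rw [hT_def]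
  have hT2 : ∀ ξs : Fin m → EuclideanSpace ℝ (Fin d),
      (T ξs).2 = (1 / (m : ℝ)) * ∑ i, g (ξs i) := fun ξs => by rw [hT_def]
  have halg : ∀ (u : ℝ) (ξs : Fin m → EuclideanSpace ℝ (Fin d)),
      (1 / (m : ℝ)) * ∑ i, (g (ξs i) - u * cost i (ξs i)) = (T ξs).2 - u * (T ξs).1 := by
    intro u ξs
    rw [hT1, hT2, Finset.sum_sub_distrib, mul_sub, ← Finset.mul_sum]
    ring
  -- Dset facts
  have hDeq : ∀ u : ℝ, Dset u =
      (fun ξs : Fin m → EuclideanSpace ℝ (Fin d) =>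
        (1 / (m : ℝ)) * ∑ i, (g (ξs i) - u * cost i (ξs i))) '' Box := by
    intro u
    rw [hDset_def]
    ext r
    simp only [Set.mem_setOf_eq, Set.mem_image]
    constructor
    · rintro ⟨ξs, h1, h2⟩
      exact ⟨ξs, (hBoxmem ξs).2 h1, by rw [h2]⟩
    · rintro ⟨ξs, h1, h2⟩
      exact ⟨ξs, (hBoxmem ξs).1 h1, by rw [← h2]⟩
  have hDc : ∀ u : ℝ, IsCompact (Dset u) := by
    intro u
    rw [hDeq u]
    exact hBoxc.image (continuous_const.mul (continuous_finset_sum _ fun i _ =>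
      ((hg.comp (continuous_apply i)).sub
        (continuous_const.mul ((hcostc i).comp (continuous_apply i))))))
  have hDne : ∀ u : ℝ, (Dset u).Nonempty := by
    intro u
    rw [hDeq u]
    exact ⟨_, Set.mem_image_of_mem _ ((hBoxmem ξh).2 hmem)⟩
  have hDgr : ∀ u : ℝ, IsGreatest (Dset u) (sSup (Dset u)) := by
    intro u
    obtain ⟨r, hr⟩ := (hDc u).exists_isGreatest (hDne u)
    rwa [hr.csSup_eq]
  have hV0D : ∀ u : ℝ, V₀ ≤ sSup (Dset u) := by
    intro u
    refine (hDgr u).2 ?_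
    rw [hDset_def]
    refine ⟨ξh, hmem, ?_⟩
    rw [hV0_def]
    congr 1
    refine Finset.sum_congr rfl fun i _ => ?_
    simp
  -- weak duality
  have hweak : ∀ r ∈ Pset, ∀ u : ℝ, 0 ≤ u → r ≤ u * ε₁ + sSup (Dset u) := by
    rintro r hr u hu
    rw [hPset_def] at hr
    obtain ⟨F, hFp, hFs, hFc, rfl⟩ := hr
    choose zmax hzmem hzmax using fun i : Fin m =>
      hΞc.exists_isMaxOn hΞne
        ((hg.sub (continuous_const.mul (hcostc i))).continuousOn
          (f := fun ξ => g ξ - u * cost i ξ))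
    have key : ∀ i : Fin m, ∫ ξ, g ξ ∂(F i) ≤
        (g (zmax i) - u * cost i (zmax i)) + u * ∫ ξ, cost i ξ ∂(F i) := by
      intro i
      haveI := hFp i
      obtain ⟨hfint, hfbd⟩ := drso_int_bound Ξ hΞc (fun ξ => g ξ - u * cost i ξ)
        (hg.sub (continuous_const.mul (hcostc i))) (F i) (hFs i)
      obtain ⟨hcint, -⟩ := drso_int_bound Ξ hΞc (cost i) (hcostc i) (F i) (hFs i)
      have hsplit : ∫ ξ, g ξ ∂(F i) =
          (∫ ξ, (g ξ - u * cost i ξ) ∂(F i)) + u * ∫ ξ, cost i ξ ∂(F i) := by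
        rw [← integral_const_mul, ← integral_add hfint (hcint.const_mul u)]
        congr 1
        funext ξ
        ring
      have hfle : ∫ ξ, (g ξ - u * cost i ξ) ∂(F i) ≤ g (zmax i) - u * cost i (zmax i) :=
        hfbd _ (fun ξ hξ => hzmax i hξ)
      linarith
    have hsum : ∑ i, ∫ ξ, g ξ ∂(F i) ≤
        (∑ i, (g (zmax i) - u * cost i (zmax i))) + u * ∑ i, ∫ ξ, cost i ξ ∂(F i) := by
      calc ∑ i, ∫ ξ, g ξ ∂(F i)
          ≤ ∑ i, ((g (zmax i) - u * cost i (zmax i)) + u * ∫ ξ, cost i ξ ∂(F i)) :=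
            Finset.sum_le_sum fun i _ => key i
        _ = _ := by rw [Finset.sum_add_distrib, ← Finset.mul_sum]
    have hFc' : (1 / (m : ℝ)) * ∑ i, ∫ ξ, cost i ξ ∂(F i) ≤ ε₁ := by
      have : ∀ i : Fin m, (∫ ξ, cost i ξ ∂(F i)) = ∫ ξ, ‖ξ - ξh i‖ ^ 2 ∂(F i) := by
        intro i; congr 1
      rw [Finset.sum_congr rfl fun i _ => this i]
      exact hFc
    have h1 : (1 / (m : ℝ)) * ∑ i, ∫ ξ, g ξ ∂(F i) ≤
        (1 / (m : ℝ)) * (∑ i, (g (zmax i) - u * cost i (zmax i))) +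
          u * ((1 / (m : ℝ)) * ∑ i, ∫ ξ, cost i ξ ∂(F i)) :=
      calc (1 / (m : ℝ)) * ∑ i, ∫ ξ, g ξ ∂(F i)
          ≤ (1 / (m : ℝ)) * ((∑ i, (g (zmax i) - u * cost i (zmax i))) +
              u * ∑ i, ∫ ξ, cost i ξ ∂(F i)) := mul_le_mul_of_nonneg_left hsum hm1
        _ = _ := by ring
    have h2 : u * ((1 / (m : ℝ)) * ∑ i, ∫ ξ, cost i ξ ∂(F i)) ≤ u * ε₁ :=
      mul_le_mul_of_nonneg_left hFc' hu
    have h3 : (1 / (m : ℝ)) * (∑ i, (g (zmax i) - u * cost i (zmax i))) ≤ sSup (Dset u) := by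
      refine le_csSup (hDc u).bddAbove ?_
      rw [hDset_def]
      exact ⟨zmax, hzmem, by simp [hcost_def]⟩
    linarith
  -- the Dirac point
  have hV0P : V₀ ∈ Pset := by
    rw [hPset_def]
    refine ⟨fun i => Measure.dirac (ξh i), fun i => inferInstance, fun i => ?_, ?_, ?_⟩
    · rw [Measure.dirac_apply' _ hΞc.isClosed.measurableSet.compl]
      simp [hmem i]
    · have : ∀ i : Fin m, (∫ ξ, ‖ξ - ξh i‖ ^ 2 ∂(Measure.dirac (ξh i))) = 0 := by
        intro i
        rw [integral_dirac]
        simp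
      rw [Finset.sum_congr rfl fun i _ => this i]
      simp [hε.le]
    · rw [hV0_def]
      congr 1
      exact Finset.sum_congr rfl fun i _ => (integral_dirac _ _).symm
  have hPne : Pset.Nonempty := ⟨V₀, hV0P⟩
  have hPbdd : BddAbove Pset := ⟨0 * ε₁ + sSup (Dset 0), fun r hr => hweak r hr 0 le_rfl⟩
  have hV0le : V₀ ≤ sSup Pset := le_csSup hPbdd hV0P
  -- Step A : points of the convex hull with feasible cost give primal values
  have hhullA : ∀ q ∈ convexHull ℝ C, q.1 ≤ ε₁ → q.2 ∈ Pset := by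
    intro q hq hq1
    rw [convexHull_eq] at hq
    obtain ⟨ι, t, w, z, hw0, hw1, hzC, hcm⟩ := hq
    have hsum : ∑ j ∈ t, w j • z j = q := by
      rw [← Finset.centerMass_eq_of_sum_1 _ _ hw1]; exact hcm
    have hsel : ∀ j : ι, ∃ a : Fin m → EuclideanSpace ℝ (Fin d),
        (∀ i, a i ∈ Ξ) ∧ (j ∈ t → T a = z j) := by
      intro j
      by_cases hj : j ∈ t
      · obtain ⟨a, haB, haT⟩ := hzC j hj
        exact ⟨a, (hBoxmem a).1 haB, fun _ => haT⟩
      · exact ⟨ξh, hmem, fun hc => absurd hc hj⟩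
    choose a ha1 ha2 using hsel
    have hq1' : q.1 = ∑ j ∈ t, w j * (z j).1 := by
      rw [← hsum, drso_fst_sum]
      exact Finset.sum_congr rfl fun j _ => by simp [Prod.smul_fst, smul_eq_mul]
    have hq2' : q.2 = ∑ j ∈ t, w j * (z j).2 := by
      rw [← hsum, drso_snd_sum]
      exact Finset.sum_congr rfl fun j _ => by simp [Prod.smul_snd, smul_eq_mul]
    have hmix : ∀ f : EuclideanSpace ℝ (Fin d) → ℝ, Continuous f →
        ∀ i : Fin m, (∫ ξ, f ξ ∂(∑ j ∈ t, ENNReal.ofReal (w j) •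
            Measure.dirac (a j i))) = ∑ j ∈ t, w j * f (a j i) :=
      fun f hf i => drso_integral_mix t w hw0 (fun j => a j i) f hf
    have hswap : ∀ f : Fin m → EuclideanSpace ℝ (Fin d) → ℝ,
        (1 / (m : ℝ)) * ∑ i : Fin m, ∑ j ∈ t, w j * f i (a j i) =
          ∑ j ∈ t, w j * ((1 / (m : ℝ)) * ∑ i : Fin m, f i (a j i)) := by
      intro f
      rw [Finset.sum_comm, Finset.mul_sum]
      refine Finset.sum_congr rfl fun j _ => ?_
      rw [← Finset.mul_sum]
      ring
    rw [hPset_def]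
    refine ⟨fun i => ∑ j ∈ t, ENNReal.ofReal (w j) • Measure.dirac (a j i),
      fun i => ?_, fun i => ?_, ?_, ?_⟩
    · constructor
      rw [Measure.finset_sum_apply]
      simp only [Measure.smul_apply, smul_eq_mul, measure_univ, mul_one]
      rw [← ENNReal.ofReal_sum_of_nonneg hw0, hw1, ENNReal.ofReal_one]
    · rw [Measure.finset_sum_apply]
      refine Finset.sum_eq_zero fun j hj => ?_
      rw [Measure.smul_apply, Measure.dirac_apply' _ hΞc.isClosed.measurableSet.compl]
      simp [ha1 j i]
    · have hre : ∀ i : Fin m, (∫ ξ, ‖ξ - ξh i‖ ^ 2 ∂(∑ j ∈ t, ENNReal.ofReal (w j) •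
          Measure.dirac (a j i))) = ∑ j ∈ t, w j * cost i (a j i) :=
        fun i => hmix (cost i) (hcostc i) i
      rw [Finset.sum_congr rfl fun i _ => hre i, hswap cost]
      have : ∑ j ∈ t, w j * ((1 / (m : ℝ)) * ∑ i : Fin m, cost i (a j i)) =
          ∑ j ∈ t, w j * (z j).1 := by
        refine Finset.sum_congr rfl fun j hj => ?_
        rw [← hT1 (a j), ha2 j hj]
      rw [this, ← hq1']
      exact hq1
    · have hre : ∀ i : Fin m, (∫ ξ, g ξ ∂(∑ j ∈ t, ENNReal.ofReal (w j) •
          Measure.dirac (a j i))) = ∑ j ∈ t, w j * g (a j i) :=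
        fun i => hmix g hg i
      rw [Finset.sum_congr rfl fun i _ => hre i, hswap fun _ => g]
      have : ∑ j ∈ t, w j * ((1 / (m : ℝ)) * ∑ i : Fin m, g (a j i)) =
          ∑ j ∈ t, w j * (z j).2 := by
        refine Finset.sum_congr rfl fun j hj => ?_
        rw [← hT2 (a j), ha2 j hj]
      rw [this, ← hq2']
  -- the key inequality on the convex hull, in a closed form
  have hhullΦ : ∀ q ∈ convexHull ℝ C,
      ε₁ * (q.2 - V₀) ≤ max q.1 ε₁ * (sSup Pset - V₀) := by
    intro q hq
    rcases le_or_gt q.1 ε₁ with hq1 | hq1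
    · have hq2 : q.2 ≤ sSup Pset := le_csSup hPbdd (hhullA q hq hq1)
      rw [max_eq_right hq1]
      nlinarith
    · have hq1pos : 0 < q.1 := hε.trans hq1
      have hlam0 : 0 ≤ ε₁ / q.1 := by positivity
      have hlam1 : ε₁ / q.1 ≤ 1 := by rw [div_le_one hq1pos]; exact hq1.le
      have hmemq' : (ε₁ / q.1) • q + (1 - ε₁ / q.1) • ((0 : ℝ), V₀) ∈ convexHull ℝ C :=
        (convex_convexHull ℝ C) hq (subset_convexHull ℝ C hSlater) hlam0
          (by linarith) (by ring)
      have h1 : ((ε₁ / q.1) • q + (1 - ε₁ / q.1) • ((0 : ℝ), V₀)).1 = ε₁ := by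
        simp only [Prod.fst_add, Prod.smul_fst, smul_eq_mul]
        field_simp
        ring
      have h2 := le_csSup hPbdd (hhullA _ hmemq' (le_of_eq h1))
      have h2' : (ε₁ / q.1) * q.2 + (1 - ε₁ / q.1) * V₀ ≤ sSup Pset := by
        simpa only [Prod.snd_add, Prod.smul_snd, smul_eq_mul] using h2
      rw [max_eq_left hq1.le]
      have h4 : ε₁ * q.2 + (q.1 - ε₁) * V₀ ≤ q.1 * sSup Pset := by
        have hmu := mul_le_mul_of_nonneg_left h2' hq1pos.le
        have heq : q.1 * ((ε₁ / q.1) * q.2 + (1 - ε₁ / q.1) * V₀) =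
            ε₁ * q.2 + (q.1 - ε₁) * V₀ := by
          field_simp
        rwa [heq] at hmu
      nlinarith [h4]
  -- pass to the closure
  have hKΦ : ∀ q ∈ closure (convexHull ℝ C),
      ε₁ * (q.2 - V₀) ≤ max q.1 ε₁ * (sSup Pset - V₀) := by
    have hcl : IsClosed {q : ℝ × ℝ | ε₁ * (q.2 - V₀) ≤ max q.1 ε₁ * (sSup Pset - V₀)} :=
      isClosed_le (continuous_const.mul (continuous_snd.sub continuous_const))
        ((continuous_fst.max continuous_const).mul continuous_const)
    exact fun q hq => closure_minimal hhullΦ hcl hq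
  have hKcomp : IsCompact (closure (convexHull ℝ C)) :=
    Metric.isCompact_of_isClosed_isBounded isClosed_closure
      ((isBounded_convexHull.2 hCc.isBounded).closure)
  -- separation step
  have hexu : ∀ δ : ℝ, 0 < δ → ∃ u : ℝ, ∃ hu : 0 ≤ u,
      u * ε₁ + sSup (Dset u) ≤ sSup Pset + δ := by
    intro δ hδ
    have hdisj : Disjoint (closure (convexHull ℝ C))
        (Set.Iic ε₁ ×ˢ Set.Ici (sSup Pset + δ)) := by
      rw [Set.disjoint_left]
      rintro q hqK hqS
      rw [Set.mem_prod, Set.mem_Iic, Set.mem_Ici] at hqS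
      have h := hKΦ q hqK
      rw [max_eq_right hqS.1] at h
      nlinarith [hqS.2]
    obtain ⟨f, s, v, hfs, hsv, hfv⟩ := geometric_hahn_banach_compact_closed
      ((convex_convexHull ℝ C).closure) hKcomp
      ((convex_Iic ε₁).prod (convex_Ici (sSup Pset + δ)))
      (isClosed_Iic.prod isClosed_Ici) hdisj
    set α := f (1, 0) with hα_def
    set β := f (0, 1) with hβ_def
    have hf_eval : ∀ a b : ℝ, f (a, b) = a * α + b * β := by
      intro a b
      have hab : (a, b) = a • ((1 : ℝ), (0 : ℝ)) + b • ((0 : ℝ), (1 : ℝ)) := by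
        simp [Prod.ext_iff]
      rw [hab, map_add, _root_.map_smul, _root_.map_smul, smul_eq_mul, smul_eq_mul, hα_def, hβ_def]
    have hS1 : ∀ n : ℝ, 0 ≤ n → v < (ε₁ - n) * α + (sSup Pset + δ) * β := by
      intro n hn
      have hmemS : (ε₁ - n, sSup Pset + δ) ∈ Set.Iic ε₁ ×ˢ Set.Ici (sSup Pset + δ) :=
        Set.mk_mem_prod (Set.mem_Iic.2 (by linarith)) (Set.mem_Ici.2 le_rfl)
      have := hfv _ hmemS
      rwa [hf_eval] at this
    have hS2 : ∀ n : ℝ, 0 ≤ n → v < ε₁ * α + (sSup Pset + δ + n) * β := by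
      intro n hn
      have hmemS : (ε₁, sSup Pset + δ + n) ∈ Set.Iic ε₁ ×ˢ Set.Ici (sSup Pset + δ) :=
        Set.mk_mem_prod (Set.mem_Iic.2 le_rfl) (Set.mem_Ici.2 (by linarith))
      have := hfv _ hmemS
      rwa [hf_eval] at this
    have hα : α ≤ 0 := by
      by_contra hcon
      push_neg at hcon
      have hub := hS1 (max 0 ((ε₁ * α + (sSup Pset + δ) * β - v) / α)) (le_max_left _ _)
      have hd : (ε₁ * α + (sSup Pset + δ) * β - v) / α ≤
          max 0 ((ε₁ * α + (sSup Pset + δ) * β - v) / α) := le_max_right _ _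
      rw [div_le_iff₀ hcon] at hd
      nlinarith
    have hβ : 0 ≤ β := by
      by_contra hcon
      push_neg at hcon
      have hub := hS2 (max 0 ((v - ε₁ * α - (sSup Pset + δ) * β) / β)) (le_max_left _ _)
      have hd : (v - ε₁ * α - (sSup Pset + δ) * β) / β ≤
          max 0 ((v - ε₁ * α - (sSup Pset + δ) * β) / β) := le_max_right _ _
      rw [div_le_iff_of_neg hcon] at hd
      nlinarith
    have hKlt : ∀ q ∈ closure (convexHull ℝ C),
        q.1 * α + q.2 * β < ε₁ * α + (sSup Pset + δ) * β := by
      intro q hqK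
      have h1 := hfs q hqK
      have h2 := hS2 0 le_rfl
      have h3 : f q = q.1 * α + q.2 * β := by
        conv_lhs => rw [← Prod.mk.eta (p := q)]
        exact hf_eval _ _
      rw [h3] at h1
      simp only [add_zero] at h2
      linarith
    rcases eq_or_lt_of_le hβ with hβ0 | hβpos
    · exfalso
      have hK0 : ((0 : ℝ), V₀) ∈ closure (convexHull ℝ C) :=
        subset_closure (subset_convexHull ℝ C hSlater)
      have h := hKlt _ hK0
      simp only at h
      nlinarith
    · refine ⟨-α / β, div_nonneg (neg_nonneg.2 hα) hβpos.le, ?_⟩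
      have hmemD := (hDgr (-α / β)).1
      rw [hDset_def] at hmemD
      obtain ⟨ξs, hξmem, hrval⟩ := hmemD
      have hTK : T ξs ∈ closure (convexHull ℝ C) :=
        subset_closure (subset_convexHull ℝ C ⟨ξs, (hBoxmem ξs).2 hξmem, rfl⟩)
      have hlt := hKlt _ hTK
      have hval : sSup (Dset (-α / β)) = (T ξs).2 - (-α / β) * (T ξs).1 := by
        rw [hrval]
        exact halg _ ξs
      rw [hval]
      obtain ⟨w1, w2, hw12⟩ : ∃ w1 w2 : ℝ, T ξs = (w1, w2) := ⟨(T ξs).1, (T ξs).2, rfl⟩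
      rw [hw12] at hlt ⊢
      simp only at hlt ⊢
      have hu₀β : (-α / β) * β = -α := by field_simp
      have e1 : (-α / β) * β * w1 = -α * w1 := by rw [hu₀β]
      have e2 : (-α / β) * β * ε₁ = -α * ε₁ := by rw [hu₀β]
      nlinarith [hlt, hβpos, e1, e2]
  -- conclusion
  have hbddBelow : BddBelow (Set.range fun u : {u : ℝ // 0 ≤ u} =>
      (u : ℝ) * ε₁ + sSup (Dset (u : ℝ))) := by
    refine ⟨V₀, ?_⟩
    rintro r ⟨u, rfl⟩
    have h1 : 0 ≤ (u : ℝ) * ε₁ := mul_nonneg u.2 hε.le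
    have h2 := hV0D (u : ℝ)
    have : V₀ ≤ (u : ℝ) * ε₁ + sSup (Dset (u : ℝ)) := by linarith
    exact this
  apply le_antisymm
  · exact le_ciInf fun u => csSup_le hPne fun r hr => hweak r hr u u.2
  · by_contra hcon
    push_neg at hcon
    set I := ⨅ u : {u : ℝ // 0 ≤ u}, ((u : ℝ) * ε₁ + sSup (Dset (u : ℝ))) with hI_def
    obtain ⟨u, hu, hle⟩ := hexu ((I - sSup Pset) / 2) (by linarith)
    have hinf_le : I ≤ u * ε₁ + sSup (Dset u) := ciInf_le hbddBelow ⟨u, hu⟩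
    linarith


/-- Strong Lagrangian duality for the inner distributional maximization of the
Wasserstein-ball DRSO (Theorem 1 of the paper). -/
theorem inner_strong_duality {p d m : ℕ} (hm : 0 < m)
    (Ξ : Set (EuclideanSpace ℝ (Fin d))) (hΞc : IsCompact Ξ)
    (h : EuclideanSpace ℝ (Fin p) → EuclideanSpace ℝ (Fin d) → ℝ)
    (x : EuclideanSpace ℝ (Fin p)) (hh : Continuous (h x))
    (y : Fin (m + 1) → EuclideanSpace ℝ (Fin d)) (A : Matrix (Fin d) (Fin d) ℝ)
    (hmem : ∀ i : Fin m,
      y i.succ - Matrix.toEuclideanLin A (y i.castSucc) ∈ Ξ)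
    (ε₁ : ℝ) (hε : 0 < ε₁) :
    sSup {r : ℝ | ∃ F : Fin m → Measure (EuclideanSpace ℝ (Fin d)),
        (∀ i, IsProbabilityMeasure (F i)) ∧ (∀ i, F i Ξᶜ = 0) ∧
        (1 / (m : ℝ)) * ∑ i, ∫ ξ,
            ‖ξ - (y i.succ - Matrix.toEuclideanLin A (y i.castSucc))‖ ^ 2 ∂(F i) ≤ ε₁ ∧
        r = (1 / (m : ℝ)) * ∑ i, ∫ ξ,
            h x (Matrix.toEuclideanLin A (y (Fin.last m)) + ξ) ∂(F i)} =
    ⨅ u : {u : ℝ // 0 ≤ u},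
      ((u : ℝ) * ε₁ + sSup {r : ℝ | ∃ ξs : Fin m → EuclideanSpace ℝ (Fin d),
        (∀ i, ξs i ∈ Ξ) ∧
        r = (1 / (m : ℝ)) * ∑ i,
          (h x (Matrix.toEuclideanLin A (y (Fin.last m)) + ξs i) -
            (u : ℝ) * ‖ξs i - (y i.succ - Matrix.toEuclideanLin A (y i.castSucc))‖ ^ 2)}) := by
  exact drso_main_aux hm Ξ hΞc
    (fun ξ => h x (Matrix.toEuclideanLin A (y (Fin.last m)) + ξ))
    (hh.comp (continuous_const.add continuous_id))
    (fun i => y i.succ - Matrix.toEuclideanLin A (y i.castSucc))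
    (fun i => hmem i) ε₁ hε
end

section
/- Let ξ̂₁,…,ξ_{n−1} ∈ Ξ with Ξ ⊆ ℝ^d compact convex, g : ℝ^d → ℝ concave and continuous, ε₁ > 0. Then inf_{u ≥ 0} [ u ε₁ + max_{ξ₁,…,ξ_{n−1} ∈ Ξ} (1/(n−1)) Σᵢ ( g(ξᵢ) − u ‖ξᵢ − ξ̂ᵢ‖² ) ] = max { (1/(n−1)) Σᵢ g(ξᵢ) : ξᵢ ∈ Ξ, (1/(n−1)) Σᵢ ‖ξᵢ − ξ̂ᵢ‖² ≤ ε₁ }. -/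
lemma normsq_combo {E : Type*} [NormedAddCommGroup E] [InnerProductSpace ℝ E]
    {a b : ℝ} (ha : 0 ≤ a) (hb : 0 ≤ b) (hab : a + b = 1) (x y : E) :
    ‖a • x + b • y‖ ^ 2 ≤ a * ‖x‖ ^ 2 + b * ‖y‖ ^ 2 := by
  have h1 : ‖a • x + b • y‖ ^ 2
      = a^2 * ‖x‖^2 + 2*(a*b)*(inner ℝ x y : ℝ) + b^2 * ‖y‖^2 := by
    rw [norm_add_sq_real, norm_smul, norm_smul, real_inner_smul_left,
      real_inner_smul_right, Real.norm_eq_abs, Real.norm_eq_abs,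
      abs_of_nonneg ha, abs_of_nonneg hb]
    ring
  have h2 : ‖x - y‖ ^ 2 = ‖x‖^2 - 2*(inner ℝ x y : ℝ) + ‖y‖^2 := norm_sub_sq_real x y
  nlinarith [sq_nonneg ‖x - y‖, mul_nonneg ha hb, sq_nonneg (a - b)]

/-- Multi-scenario Lagrangian strong duality used in Theorem 2 of the paper. -/
theorem multi_scenario_duality {d m : ℕ} (hm : 0 < m)
    (Ξ : Set (EuclideanSpace ℝ (Fin d)))
    (hΞc : IsCompact Ξ) (hΞconv : Convex ℝ Ξ)
    (ξhat : Fin m → EuclideanSpace ℝ (Fin d)) (hξhat : ∀ i, ξhat i ∈ Ξ)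
    (g : EuclideanSpace ℝ (Fin d) → ℝ)
    (hgconc : ConcaveOn ℝ Set.univ g) (hgcont : Continuous g)
    (ε₁ : ℝ) (hε₁ : 0 < ε₁) :
    (⨅ u : {u : ℝ // 0 ≤ u},
        ((u : ℝ) * ε₁ + sSup {r : ℝ | ∃ ξs : Fin m → EuclideanSpace ℝ (Fin d),
          (∀ i, ξs i ∈ Ξ) ∧
          r = (1 / (m : ℝ)) * ∑ i, (g (ξs i) - (u : ℝ) * ‖ξs i - ξhat i‖ ^ 2)})) =
      sSup {r : ℝ | ∃ ξs : Fin m → EuclideanSpace ℝ (Fin d),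
        (∀ i, ξs i ∈ Ξ) ∧
        (1 / (m : ℝ)) * ∑ i, ‖ξs i - ξhat i‖ ^ 2 ≤ ε₁ ∧
        r = (1 / (m : ℝ)) * ∑ i, g (ξs i)} := by
  classical
  have hm0 : (0:ℝ) < (m:ℝ) := by exact_mod_cast hm
  have hcpos : (0:ℝ) < 1 / (m:ℝ) := by positivity
  -- the value function of the constrained problem
  set P : ℝ → Set ℝ := fun t => {r : ℝ | ∃ ξs : Fin m → EuclideanSpace ℝ (Fin d),
        (∀ i, ξs i ∈ Ξ) ∧
        (1 / (m : ℝ)) * ∑ i, ‖ξs i - ξhat i‖ ^ 2 ≤ t ∧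
        r = (1 / (m : ℝ)) * ∑ i, g (ξs i)} with hP
  set φ : ℝ → ℝ := fun t => sSup (P t) with hφ
  -- the inner (Lagrangian) sets
  set A : ℝ → Set ℝ := fun u => {r : ℝ | ∃ ξs : Fin m → EuclideanSpace ℝ (Fin d),
        (∀ i, ξs i ∈ Ξ) ∧
        r = (1 / (m : ℝ)) * ∑ i, (g (ξs i) - u * ‖ξs i - ξhat i‖ ^ 2)} with hA
  -- a uniform upper bound for g on Ξ
  obtain ⟨M, hM⟩ : ∃ M, ∀ ξ ∈ Ξ, g ξ ≤ M := by
    obtain ⟨M, hM⟩ := (hΞc.bddAbove_image hgcont.continuousOn)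
    exact ⟨M, fun ξ hξ => hM (Set.mem_image_of_mem g hξ)⟩
  have hsumM : ∀ (ξs : Fin m → EuclideanSpace ℝ (Fin d)), (∀ i, ξs i ∈ Ξ) →
      (1 / (m:ℝ)) * ∑ i, g (ξs i) ≤ M := by
    intro ξs hξs
    have h1 : ∑ i, g (ξs i) ≤ (m:ℝ) * M := by
      calc ∑ i, g (ξs i) ≤ ∑ _i : Fin m, M := Finset.sum_le_sum (fun i _ => hM _ (hξs i))
        _ = (m:ℝ) * M := by simp [Finset.sum_const, Finset.card_univ, mul_comm]
    calc (1 / (m:ℝ)) * ∑ i, g (ξs i) ≤ (1 / (m:ℝ)) * ((m:ℝ) * M) :=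
          mul_le_mul_of_nonneg_left h1 hcpos.le
      _ = M := by field_simp
  -- nonemptiness and boundedness of P t
  have hPne : ∀ t : ℝ, 0 ≤ t → (P t).Nonempty := by
    intro t ht
    refine ⟨(1 / (m:ℝ)) * ∑ i, g (ξhat i), ξhat, hξhat, ?_, rfl⟩
    simp [sub_self, ht]
  have hPbb : ∀ t : ℝ, BddAbove (P t) := by
    intro t
    refine ⟨M, fun r hr => ?_⟩
    obtain ⟨ξs, hξs, -, rfl⟩ := hr
    exact hsumM ξs hξs
  have hPle : ∀ {t r : ℝ}, r ∈ P t → r ≤ φ t := fun {t r} hr => le_csSup (hPbb t) hr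
  have hφmono : ∀ {s t : ℝ}, 0 ≤ s → s ≤ t → φ s ≤ φ t := by
    intro s t hs hst
    refine csSup_le_csSup (hPbb t) (hPne s hs) ?_
    rintro r ⟨ξs, h1, h2, h3⟩
    exact ⟨ξs, h1, h2.trans hst, h3⟩
  -- key combination lemma
  have hkey : ∀ (a b la lb : ℝ), 0 ≤ a → 0 ≤ b → 0 ≤ la → 0 ≤ lb → la + lb = 1 →
      ∀ ra ∈ P a, ∀ rb ∈ P b, la * ra + lb * rb ≤ φ (la * a + lb * b) := by
    intro a b la lb ha hb hla hlb hlab ra hra rb hrb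
    obtain ⟨ξa, hξa, hta, rfl⟩ := hra
    obtain ⟨ξb, hξb, htb, rfl⟩ := hrb
    set ξs : Fin m → EuclideanSpace ℝ (Fin d) := fun i => la • ξa i + lb • ξb i with hξs
    have hmem : ∀ i, ξs i ∈ Ξ := fun i => hΞconv (hξa i) (hξb i) hla hlb hlab
    have hnorm : ∀ i, ‖ξs i - ξhat i‖ ^ 2
        ≤ la * ‖ξa i - ξhat i‖ ^ 2 + lb * ‖ξb i - ξhat i‖ ^ 2 := by
      intro i
      have hdecomp : ξs i - ξhat i = la • (ξa i - ξhat i) + lb • (ξb i - ξhat i) := by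
        calc ξs i - ξhat i = la • ξa i + lb • ξb i - (la + lb) • ξhat i := by
              rw [hlab, one_smul]
          _ = la • (ξa i - ξhat i) + lb • (ξb i - ξhat i) := by
              rw [add_smul, smul_sub, smul_sub]; abel
      rw [hdecomp]
      exact normsq_combo hla hlb hlab _ _
    have hval : ∀ i, la * g (ξa i) + lb * g (ξb i) ≤ g (ξs i) := by
      intro i
      have := hgconc.2 (Set.mem_univ (ξa i)) (Set.mem_univ (ξb i)) hla hlb hlab
      simpa using this
    have hcon : (1 / (m:ℝ)) * ∑ i, ‖ξs i - ξhat i‖ ^ 2 ≤ la * a + lb * b := by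
      have h1 : ∑ i, ‖ξs i - ξhat i‖ ^ 2
          ≤ ∑ i, (la * ‖ξa i - ξhat i‖ ^ 2 + lb * ‖ξb i - ξhat i‖ ^ 2) :=
        Finset.sum_le_sum (fun i _ => hnorm i)
      have h2 : (1 / (m:ℝ)) * ∑ i, (la * ‖ξa i - ξhat i‖ ^ 2 + lb * ‖ξb i - ξhat i‖ ^ 2)
          = la * ((1 / (m:ℝ)) * ∑ i, ‖ξa i - ξhat i‖ ^ 2)
            + lb * ((1 / (m:ℝ)) * ∑ i, ‖ξb i - ξhat i‖ ^ 2) := by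
        rw [Finset.sum_add_distrib, ← Finset.mul_sum, ← Finset.mul_sum]; ring
      calc (1 / (m:ℝ)) * ∑ i, ‖ξs i - ξhat i‖ ^ 2
          ≤ (1 / (m:ℝ)) * ∑ i, (la * ‖ξa i - ξhat i‖ ^ 2 + lb * ‖ξb i - ξhat i‖ ^ 2) :=
            mul_le_mul_of_nonneg_left h1 hcpos.le
        _ = la * ((1 / (m:ℝ)) * ∑ i, ‖ξa i - ξhat i‖ ^ 2)
            + lb * ((1 / (m:ℝ)) * ∑ i, ‖ξb i - ξhat i‖ ^ 2) := h2
        _ ≤ la * a + lb * b := by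
            have := mul_le_mul_of_nonneg_left hta hla
            have := mul_le_mul_of_nonneg_left htb hlb
            linarith
    have hmemP : (1 / (m:ℝ)) * ∑ i, g (ξs i) ∈ P (la * a + lb * b) :=
      ⟨ξs, hmem, hcon, rfl⟩
    have hge : la * ((1 / (m:ℝ)) * ∑ i, g (ξa i)) + lb * ((1 / (m:ℝ)) * ∑ i, g (ξb i))
        ≤ (1 / (m:ℝ)) * ∑ i, g (ξs i) := by
      have h1 : ∑ i, (la * g (ξa i) + lb * g (ξb i)) ≤ ∑ i, g (ξs i) :=
        Finset.sum_le_sum (fun i _ => hval i)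
      have h2 : la * ((1 / (m:ℝ)) * ∑ i, g (ξa i)) + lb * ((1 / (m:ℝ)) * ∑ i, g (ξb i))
          = (1 / (m:ℝ)) * ∑ i, (la * g (ξa i) + lb * g (ξb i)) := by
        rw [Finset.sum_add_distrib, ← Finset.mul_sum, ← Finset.mul_sum]; ring
      rw [h2]
      exact mul_le_mul_of_nonneg_left h1 hcpos.le
    exact hge.trans (hPle hmemP)
  -- concavity of φ on [0, ∞)
  have hφconc : ConcaveOn ℝ (Set.Ici (0:ℝ)) φ := by
    refine ⟨convex_Ici 0, ?_⟩
    intro a ha b hb la lb hla hlb hlab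
    simp only [smul_eq_mul]
    rw [Set.mem_Ici] at ha hb
    rcases eq_or_lt_of_le hla with h | hla'
    · have hlb1 : lb = 1 := by linarith
      rw [← h, hlb1]; simp
    rcases eq_or_lt_of_le hlb with h | hlb'
    · have hla1 : la = 1 := by linarith
      rw [← h, hla1]; simp
    have hab0 : 0 ≤ la * a + lb * b := by positivity
    have h1 : ∀ ra ∈ P a, la * ra + lb * φ b ≤ φ (la * a + lb * b) := by
      intro ra hra
      have h2 : φ b ≤ (φ (la * a + lb * b) - la * ra) / lb := by
        refine csSup_le (hPne b hb) (fun rb hrb => ?_)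
        rw [le_div_iff₀ hlb']
        have := hkey a b la lb ha hb hla hlb hlab ra hra rb hrb
        linarith
      have h3 := mul_le_mul_of_nonneg_left h2 hlb
      rw [mul_div_cancel₀ _ (ne_of_gt hlb')] at h3
      linarith
    have h4 : φ a ≤ (φ (la * a + lb * b) - lb * φ b) / la := by
      refine csSup_le (hPne a ha) (fun ra hra => ?_)
      rw [le_div_iff₀ hla']
      have := h1 ra hra
      linarith
    have h5 := mul_le_mul_of_nonneg_left h4 hla
    rw [mul_div_cancel₀ _ (ne_of_gt hla')] at h5
    linarith
  -- nonemptiness and boundedness of A u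
  have hAne : ∀ u : ℝ, (A u).Nonempty := fun u =>
    ⟨(1 / (m:ℝ)) * ∑ i, (g (ξhat i) - u * ‖ξhat i - ξhat i‖ ^ 2), ξhat, hξhat, rfl⟩
  have hAbb : ∀ u : ℝ, 0 ≤ u → BddAbove (A u) := by
    intro u hu
    refine ⟨M, fun r hr => ?_⟩
    obtain ⟨ξs, hξs, rfl⟩ := hr
    have h1 : ∑ i, (g (ξs i) - u * ‖ξs i - ξhat i‖ ^ 2) ≤ ∑ i, g (ξs i) := by
      refine Finset.sum_le_sum (fun i _ => ?_)
      have : 0 ≤ u * ‖ξs i - ξhat i‖ ^ 2 := by positivity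
      linarith
    calc (1 / (m:ℝ)) * ∑ i, (g (ξs i) - u * ‖ξs i - ξhat i‖ ^ 2)
        ≤ (1 / (m:ℝ)) * ∑ i, g (ξs i) := mul_le_mul_of_nonneg_left h1 hcpos.le
      _ ≤ M := hsumM ξs hξs
  -- weak duality
  have hweak : ∀ u : ℝ, 0 ≤ u → φ ε₁ ≤ u * ε₁ + sSup (A u) := by
    intro u hu
    refine csSup_le (hPne ε₁ hε₁.le) ?_
    rintro r ⟨ξs, hξs, hcon, rfl⟩
    have hmem : (1 / (m:ℝ)) * ∑ i, (g (ξs i) - u * ‖ξs i - ξhat i‖ ^ 2) ∈ A u :=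
      ⟨ξs, hξs, rfl⟩
    have h1 : (1 / (m:ℝ)) * ∑ i, (g (ξs i) - u * ‖ξs i - ξhat i‖ ^ 2) ≤ sSup (A u) :=
      le_csSup (hAbb u hu) hmem
    have h2 : (1 / (m:ℝ)) * ∑ i, (g (ξs i) - u * ‖ξs i - ξhat i‖ ^ 2)
        = (1 / (m:ℝ)) * ∑ i, g (ξs i) - u * ((1 / (m:ℝ)) * ∑ i, ‖ξs i - ξhat i‖ ^ 2) := by
      rw [Finset.sum_sub_distrib, ← Finset.mul_sum]; ring
    have h3 : u * ((1 / (m:ℝ)) * ∑ i, ‖ξs i - ξhat i‖ ^ 2) ≤ u * ε₁ :=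
      mul_le_mul_of_nonneg_left hcon hu
    linarith
  -- the supergradient of φ at ε₁
  set Sl : Set ℝ := {s : ℝ | ∃ t : ℝ, ε₁ < t ∧ s = (φ t - φ ε₁) / (t - ε₁)} with hSl
  have hSlne : Sl.Nonempty := ⟨(φ (ε₁ + 1) - φ ε₁) / (ε₁ + 1 - ε₁), ε₁ + 1, by linarith, rfl⟩
  have hSlbb : BddAbove Sl := by
    refine ⟨(φ ε₁ - φ 0) / (ε₁ - 0), ?_⟩
    rintro s ⟨t, ht, rfl⟩
    exact hφconc.slope_anti_adjacent (Set.mem_Ici.2 le_rfl)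
      (Set.mem_Ici.2 (by linarith)) hε₁ ht
  set ustar : ℝ := sSup Sl with hustar
  have hustar0 : 0 ≤ ustar := by
    have h1 : (φ (ε₁ + 1) - φ ε₁) / (ε₁ + 1 - ε₁) ≤ ustar :=
      le_csSup hSlbb ⟨ε₁ + 1, by linarith, rfl⟩
    have h2 : 0 ≤ (φ (ε₁ + 1) - φ ε₁) / (ε₁ + 1 - ε₁) := by
      apply div_nonneg _ (by linarith)
      have := hφmono hε₁.le (by linarith : ε₁ ≤ ε₁ + 1)
      linarith
    linarith
  have hsg : ∀ t : ℝ, 0 ≤ t → φ t ≤ φ ε₁ + ustar * (t - ε₁) := by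
    intro t ht
    rcases lt_trichotomy t ε₁ with h | h | h
    · have h1 : ustar ≤ (φ ε₁ - φ t) / (ε₁ - t) := by
        refine csSup_le hSlne ?_
        rintro s ⟨t', ht', rfl⟩
        exact hφconc.slope_anti_adjacent (Set.mem_Ici.2 ht)
          (Set.mem_Ici.2 (by linarith)) h ht'
      rw [le_div_iff₀ (by linarith : (0:ℝ) < ε₁ - t)] at h1
      nlinarith
    · rw [h]; simp
    · have h1 : (φ t - φ ε₁) / (t - ε₁) ≤ ustar := le_csSup hSlbb ⟨t, h, rfl⟩
      rw [div_le_iff₀ (by linarith : (0:ℝ) < t - ε₁)] at h1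
      nlinarith
  -- strong duality at ustar
  have hstrong : ustar * ε₁ + sSup (A ustar) ≤ φ ε₁ := by
    have h1 : sSup (A ustar) ≤ φ ε₁ - ustar * ε₁ := by
      refine csSup_le (hAne ustar) ?_
      rintro r ⟨ξs, hξs, rfl⟩
      set t : ℝ := (1 / (m:ℝ)) * ∑ i, ‖ξs i - ξhat i‖ ^ 2 with htdef
      have ht0 : 0 ≤ t := by positivity
      have hmem : (1 / (m:ℝ)) * ∑ i, g (ξs i) ∈ P t := ⟨ξs, hξs, le_rfl, rfl⟩
      have h2 : (1 / (m:ℝ)) * ∑ i, g (ξs i) ≤ φ ε₁ + ustar * (t - ε₁) :=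
        (hPle hmem).trans (hsg t ht0)
      have h3 : (1 / (m:ℝ)) * ∑ i, (g (ξs i) - ustar * ‖ξs i - ξhat i‖ ^ 2)
          = (1 / (m:ℝ)) * ∑ i, g (ξs i) - ustar * t := by
        rw [htdef, Finset.sum_sub_distrib, ← Finset.mul_sum]; ring
      rw [h3]
      linarith
    linarith
  -- conclude
  have hbdd : BddBelow (Set.range (fun u : {u : ℝ // 0 ≤ u} =>
      (u : ℝ) * ε₁ + sSup (A u))) := by
    refine ⟨φ ε₁, ?_⟩
    rintro x ⟨u, rfl⟩
    exact hweak u u.2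
  apply le_antisymm
  · exact (ciInf_le hbdd ⟨ustar, hustar0⟩).trans hstrong
  · exact le_ciInf (fun u => hweak u u.2)
end
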